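/- Let G be a graph on vertex set {1,...,p} in which every vertex has degree at most K (G is K-sparse). Let S be a random subset of {1,...,p} in which each vertex j is included independently with probability ε ∈ (0,1). Then for any integer m ≥ 1, with probability at least 1 − p·(eεK)^{m+1}, every connected component of the subgraph of G induced on S has at most m vertices. -/

import Mathlib

open MeasureTheory
open scoped ENNReal

namespace Stmt0Aux

variable {V : Type*}

/-- The `i`-th vertex recorded in the exploration list. -/
def vtx (v : V) (l : List (V × ℕ)) (i : ℕ) : V := (l.getD i (v, 0)).1

/-- Candidate predicate: code `nn` encodes a pair (parent index `nn / K`, slot `nn % K`)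
for which a fresh vertex can be attached. -/
def candP (H : SimpleGraph V) (f : V → V → ℕ) (K : ℕ) (v : V) (l : List (V × ℕ)) (nn : ℕ) : Prop :=
  ∃ w : V, (∀ j, j < l.length → w ≠ vtx v l j) ∧ H.Adj (vtx v l (nn / K)) w ∧
    f (vtx v l (nn / K)) w = nn % K

/-- Candidates at a given stage. -/
noncomputable def cands (H : SimpleGraph V) (f : V → V → ℕ) (K : ℕ) (v : V)
    (l : List (V × ℕ)) : Finset ℕ :=
  @Finset.filter _ (candP H f K v l) (fun _ => Classical.propDecidable _)
    (Finset.range (l.length * K))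

lemma candP_of_mem_cands {H : SimpleGraph V} {f : V → V → ℕ} {K : ℕ} {v : V}
    {l : List (V × ℕ)} {nn : ℕ} (h : nn ∈ cands H f K v l) :
    nn < l.length * K ∧ candP H f K v l nn := by
  classical
  unfold cands at h
  simp only [Finset.filter_congr_decidable, Finset.mem_filter, Finset.mem_range] at h
  exact h

lemma mem_cands {H : SimpleGraph V} {f : V → V → ℕ} {K : ℕ} {v : V}
    {l : List (V × ℕ)} {nn : ℕ} (h1 : nn < l.length * K) (h2 : candP H f K v l nn) :
    nn ∈ cands H f K v l := by
  classical
  unfold cands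
  simp only [Finset.filter_congr_decidable, Finset.mem_filter, Finset.mem_range]
  exact ⟨h1, h2⟩

/-- One exploration step: choose the minimal candidate code and a witness vertex for it. -/
noncomputable def step (H : SimpleGraph V) (f : V → V → ℕ) (K : ℕ) (v : V)
    (l : List (V × ℕ)) : V × ℕ :=
  if h : (cands H f K v l).Nonempty then
    have hm : candP H f K v l ((cands H f K v l).min' h) :=
      (candP_of_mem_cands ((cands H f K v l).min'_mem h)).2
    (Classical.choose hm, (cands H f K v l).min' h)
  else (v, 0)

lemma step_spec {H : SimpleGraph V} {f : V → V → ℕ} {K : ℕ} {v : V} {l : List (V × ℕ)}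
    (h : (cands H f K v l).Nonempty) :
    (step H f K v l).2 ∈ cands H f K v l ∧
    (∀ q ∈ cands H f K v l, (step H f K v l).2 ≤ q) ∧
    (∀ j, j < l.length → (step H f K v l).1 ≠ vtx v l j) ∧
    H.Adj (vtx v l ((step H f K v l).2 / K)) (step H f K v l).1 ∧
    f (vtx v l ((step H f K v l).2 / K)) (step H f K v l).1 = (step H f K v l).2 % K := by
  have hm : candP H f K v l ((cands H f K v l).min' h) :=
    (candP_of_mem_cands ((cands H f K v l).min'_mem h)).2
  simp only [step, dif_pos h]
  obtain ⟨h1, h2, h3⟩ := Classical.choose_spec hm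
  exact ⟨(cands H f K v l).min'_mem h, fun q hq => Finset.min'_le _ _ hq, h1, h2, h3⟩

/-- The exploration list. -/
noncomputable def bfsL (H : SimpleGraph V) (f : V → V → ℕ) (K : ℕ) (v : V) : ℕ → List (V × ℕ)
  | 0 => [(v, 0)]
  | (r + 1) => bfsL H f K v r ++ [step H f K v (bfsL H f K v r)]

@[simp] lemma bfsL_length (H : SimpleGraph V) (f : V → V → ℕ) (K : ℕ) (v : V) (r : ℕ) :
    (bfsL H f K v r).length = r + 1 := by
  induction r with
  | zero => rfl
  | succ r ih => simp [bfsL, ih]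

lemma bfsL_prefix (H : SimpleGraph V) (f : V → V → ℕ) (K : ℕ) (v : V) {r r' : ℕ}
    (h : r ≤ r') : bfsL H f K v r <+: bfsL H f K v r' := by
  induction h with
  | refl => exact List.prefix_rfl
  | step h ih => exact ih.trans ⟨_, rfl⟩

lemma bfsL_getD_stable (H : SimpleGraph V) (f : V → V → ℕ) (K : ℕ) (v : V) {i r r' : ℕ}
    (hir : i ≤ r) (h : r ≤ r') (d : V × ℕ) :
    (bfsL H f K v r').getD i d = (bfsL H f K v r).getD i d := by
  obtain ⟨t, ht⟩ := bfsL_prefix H f K v h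
  have hi : i < (bfsL H f K v r).length := by simp [bfsL_length]; omega
  rw [← ht]
  rw [List.getD_eq_getElem _ _ (by simp [List.length_append]; omega),
    List.getD_eq_getElem _ _ hi, List.getElem_append_left hi]

lemma bfsL_getD_last (H : SimpleGraph V) (f : V → V → ℕ) (K : ℕ) (v : V) (r : ℕ) (d : V × ℕ) :
    (bfsL H f K v (r + 1)).getD (r + 1) d = step H f K v (bfsL H f K v r) := by
  show (bfsL H f K v r ++ [step H f K v (bfsL H f K v r)]).getD (r+1) d = _
  rw [List.getD_eq_getElem _ _ (by simp)]
  rw [List.getElem_append_right (by simp)]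
  simp

@[simp] lemma bfsL_getD_zero (H : SimpleGraph V) (f : V → V → ℕ) (K : ℕ) (v : V) (r : ℕ)
    (d : V × ℕ) : (bfsL H f K v r).getD 0 d = (v, 0) := by
  rw [bfsL_getD_stable H f K v (Nat.zero_le 0) (Nat.zero_le r) d]
  rfl

lemma walk_boundary {H : SimpleGraph V} {P : V → Prop} :
    ∀ {u w : V}, H.Walk u w → P u → ¬ P w → ∃ a b, H.Adj a b ∧ P a ∧ ¬ P b := by
  intro u w wk
  induction wk with
  | nil => intro h h'; exact absurd h h'
  | @cons u u' w h q ih =>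
    intro hu hw
    by_cases h2 : P u'
    · exact ih h2 hw
    · exact ⟨u, u', h, hu, h2⟩

/-- The `i`-th explored vertex (using the stage-`m` list). -/
noncomputable def Xv (H : SimpleGraph V) (f : V → V → ℕ) (K : ℕ) (v : V) (m i : ℕ) : V :=
  vtx v (bfsL H f K v m) i

/-- The code recorded with the `i`-th explored vertex. -/
noncomputable def Nv (H : SimpleGraph V) (f : V → V → ℕ) (K : ℕ) (v : V) (m i : ℕ) : ℕ :=
  ((bfsL H f K v m).getD i (v, 0)).2

lemma Xv_zero (H : SimpleGraph V) (f : V → V → ℕ) (K : ℕ) (v : V) (m : ℕ) :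
    Xv H f K v m 0 = v := by
  unfold Xv vtx; rw [bfsL_getD_zero]

lemma Xv_stable (H : SimpleGraph V) (f : V → V → ℕ) (K : ℕ) (v : V) {i r m : ℕ}
    (hir : i ≤ r) (h : r ≤ m) :
    vtx v (bfsL H f K v r) i = Xv H f K v m i := by
  unfold Xv vtx; rw [bfsL_getD_stable H f K v hir h]

lemma XNv_entry (H : SimpleGraph V) (f : V → V → ℕ) (K : ℕ) (v : V) {i m : ℕ}
    (h1 : 1 ≤ i) (h2 : i ≤ m) :
    (Xv H f K v m i, Nv H f K v m i) = step H f K v (bfsL H f K v (i - 1)) := by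
  unfold Xv Nv vtx
  rw [bfsL_getD_stable H f K v (le_refl i) h2]
  obtain ⟨j, rfl⟩ : ∃ j, i = j + 1 := ⟨i - 1, by omega⟩
  have := bfsL_getD_last H f K v j (v, 0)
  simp only [Nat.add_sub_cancel]
  rw [this]

lemma bfs_invariant [DecidableEq V] (H : SimpleGraph V) (f : V → V → ℕ) (K : ℕ) (v : V) (m : ℕ)
    (hf : ∀ a : V, Set.InjOn (f a) (H.neighborSet a))
    (hfK : ∀ a b : V, H.Adj a b → f a b < K)
    (hbig : m + 1 ≤ Nat.card {w : V // H.Reachable v w}) :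
    ∀ r, r ≤ m →
      (∀ i j, i ≤ r → j ≤ r → Xv H f K v m i = Xv H f K v m j → i = j) ∧
      (∀ i, i ≤ r → H.Reachable v (Xv H f K v m i)) ∧
      (∀ i, 1 ≤ i → i ≤ r →
        Nv H f K v m i ∈ cands H f K v (bfsL H f K v (i-1)) ∧
        Nv H f K v m i / K < i ∧
        H.Adj (Xv H f K v m (Nv H f K v m i / K)) (Xv H f K v m i) ∧
        f (Xv H f K v m (Nv H f K v m i / K)) (Xv H f K v m i) = Nv H f K v m i % K) ∧
      (∀ i, 1 ≤ i → i + 1 ≤ r → Nv H f K v m i < Nv H f K v m (i+1)) := by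
  intro r
  induction r with
  | zero =>
    intro _
    refine ⟨fun i j hi hj _ => by omega, fun i hi => ?_, fun i h1 h2 => by omega,
      fun i h1 h2 => by omega⟩
    interval_cases i
    rw [Xv_zero H f K v m]
  | succ r ih =>
    intro hrm
    have hrm' : r ≤ m := by omega
    obtain ⟨hinj, hreach, htree, hmono⟩ := ih hrm'
    -- Step 1: the candidate set at stage r is nonempty.
    have hfresh_ex : ∃ w : V, H.Reachable v w ∧ ∀ j, j ≤ r → w ≠ Xv H f K v m j := by
      by_contra hcon
      push_neg at hcon
      have hsub : {w : V | H.Reachable v w} ⊆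
          ↑((Finset.range (r+1)).image (fun i => Xv H f K v m i)) := by
        intro w hw
        obtain ⟨j, hj, hwj⟩ := hcon w hw
        exact Finset.mem_coe.mpr
          (Finset.mem_image.mpr ⟨j, Finset.mem_range.mpr (by omega), hwj.symm⟩)
      have hcard : Nat.card {w : V // H.Reachable v w} ≤ r + 1 := by
        have h1 : Nat.card {w : V // H.Reachable v w} = Set.ncard {w : V | H.Reachable v w} :=
          Nat.card_coe_set_eq _
        have h2 := Set.ncard_le_ncard hsub (Set.toFinite _)
        rw [Set.ncard_coe_finset] at h2
        have h3 := Finset.card_image_le (s := Finset.range (r+1))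
          (f := fun i => Xv H f K v m i)
        rw [Finset.card_range] at h3
        omega
      omega
    obtain ⟨w, hwreach, hwfresh⟩ := hfresh_ex
    have hPv : ∃ j, j ≤ r ∧ v = Xv H f K v m j := ⟨0, by omega, (Xv_zero H f K v m).symm⟩
    have hPw : ¬ ∃ j, j ≤ r ∧ w = Xv H f K v m j := by
      rintro ⟨j, hj, rfl⟩; exact hwfresh j hj rfl
    obtain ⟨wk⟩ := hwreach
    obtain ⟨a, b, hab, hPa, hPb⟩ :=
      walk_boundary (P := fun z => ∃ j, j ≤ r ∧ z = Xv H f K v m j) wk hPv hPw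
    obtain ⟨qa, hqa, rfl⟩ := hPa
    have hfab : f (Xv H f K v m qa) b < K := hfK _ _ hab
    have hK0 : 0 < K := by omega
    have hdiv : (K * qa + f (Xv H f K v m qa) b) / K = qa := by
      rw [Nat.mul_add_div hK0, Nat.div_eq_of_lt hfab, Nat.add_zero]
    have hmod : (K * qa + f (Xv H f K v m qa) b) % K = f (Xv H f K v m qa) b := by
      rw [Nat.mul_add_mod, Nat.mod_eq_of_lt hfab]
    have hmemc : (K * qa + f (Xv H f K v m qa) b) ∈ cands H f K v (bfsL H f K v r) := by
      apply mem_cands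
      · rw [bfsL_length]
        calc K * qa + f (Xv H f K v m qa) b < K * qa + K := by omega
          _ = K * (qa + 1) := by ring
          _ ≤ K * (r + 1) := Nat.mul_le_mul_left K (by omega)
          _ = (r + 1) * K := Nat.mul_comm _ _
      · refine ⟨b, ?_, ?_, ?_⟩
        · intro j hj
          rw [bfsL_length] at hj
          rw [Xv_stable H f K v (by omega : j ≤ r) hrm']
          intro hbj
          exact hPb ⟨j, by omega, hbj⟩
        · rw [hdiv, Xv_stable H f K v hqa hrm']; exact hab
        · rw [hdiv, hmod, Xv_stable H f K v hqa hrm']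
    have hne : (cands H f K v (bfsL H f K v r)).Nonempty := ⟨_, hmemc⟩
    obtain ⟨hsp_mem, hsp_min, hsp_fresh, hsp_adj, hsp_f⟩ := step_spec hne
    have hentry := XNv_entry H f K v (by omega : 1 ≤ r + 1) hrm
    simp only [Nat.add_sub_cancel] at hentry
    have hX1 : Xv H f K v m (r+1) = (step H f K v (bfsL H f K v r)).1 := by
      rw [← hentry]
    have hN1 : Nv H f K v m (r+1) = (step H f K v (bfsL H f K v r)).2 := by
      rw [← hentry]
    rw [← hX1] at hsp_fresh hsp_adj hsp_f
    rw [← hN1] at hsp_mem hsp_min hsp_adj hsp_f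
    have hNlt : Nv H f K v m (r+1) < (r+1) * K := by
      have := (candP_of_mem_cands hsp_mem).1
      rwa [bfsL_length] at this
    have hNdiv : Nv H f K v m (r+1) / K < r + 1 := by
      rw [Nat.div_lt_iff_lt_mul hK0]; exact hNlt
    have hfreshX : ∀ j, j ≤ r → Xv H f K v m (r+1) ≠ Xv H f K v m j := by
      intro j hj
      have := hsp_fresh j (by rw [bfsL_length]; omega)
      rwa [Xv_stable H f K v hj hrm'] at this
    have hadjX : H.Adj (Xv H f K v m (Nv H f K v m (r+1) / K)) (Xv H f K v m (r+1)) := by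
      have h := hsp_adj
      rwa [Xv_stable H f K v (by omega : Nv H f K v m (r+1) / K ≤ r) hrm'] at h
    have hfX : f (Xv H f K v m (Nv H f K v m (r+1) / K)) (Xv H f K v m (r+1))
        = Nv H f K v m (r+1) % K := by
      have h := hsp_f
      rwa [Xv_stable H f K v (by omega : Nv H f K v m (r+1) / K ≤ r) hrm'] at h
    have hinj' : ∀ i j, i ≤ r + 1 → j ≤ r + 1 →
        Xv H f K v m i = Xv H f K v m j → i = j := by
      intro i j hi hj hij
      rcases Nat.lt_or_ge i (r+1) with hi' | hi' <;> rcases Nat.lt_or_ge j (r+1) with hj' | hj'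
      · exact hinj i j (by omega) (by omega) hij
      · have hj'' : j = r + 1 := by omega
        subst hj''
        exact absurd hij.symm (hfreshX i (by omega))
      · have hi'' : i = r + 1 := by omega
        subst hi''
        exact absurd hij (hfreshX j (by omega))
      · omega
    have hreach' : ∀ i, i ≤ r + 1 → H.Reachable v (Xv H f K v m i) := by
      intro i hi
      rcases Nat.lt_or_ge i (r+1) with hi' | hi'
      · exact hreach i (by omega)
      · have : i = r + 1 := by omega
        subst this
        exact (hreach (Nv H f K v m (r+1) / K) (by omega)).trans hadjX.reachable
    have htree' : ∀ i, 1 ≤ i → i ≤ r + 1 →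
        Nv H f K v m i ∈ cands H f K v (bfsL H f K v (i-1)) ∧ Nv H f K v m i / K < i ∧
        H.Adj (Xv H f K v m (Nv H f K v m i / K)) (Xv H f K v m i) ∧
        f (Xv H f K v m (Nv H f K v m i / K)) (Xv H f K v m i) = Nv H f K v m i % K := by
      intro i h1 h2
      rcases Nat.lt_or_ge i (r+1) with hi' | hi'
      · exact htree i h1 (by omega)
      · have : i = r + 1 := by omega
        subst this
        refine ⟨?_, hNdiv, hadjX, hfX⟩
        rw [show r + 1 - 1 = r by omega]
        exact hsp_mem
    have hmono' : ∀ i, 1 ≤ i → i + 1 ≤ r + 1 →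
        Nv H f K v m i < Nv H f K v m (i+1) := by
      intro i h1 h2
      rcases Nat.lt_or_ge (i+1) (r+1) with hi' | hi'
      · exact hmono i h1 (by omega)
      · have hir : i = r := by omega
        subst hir
        by_contra hle
        push_neg at hle
        obtain ⟨hNm_mem, hNm_div, hNm_adj, hNm_f⟩ := htree i h1 (le_refl i)
        have hNr_lt : Nv H f K v m i < i * K := by
          have := (candP_of_mem_cands hNm_mem).1
          rwa [bfsL_length, Nat.sub_add_cancel h1] at this
        have hd : Nv H f K v m (i+1) / K ≤ Nv H f K v m i / K := Nat.div_le_div_right hle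
        have hmem2 : Nv H f K v m (i+1) ∈ cands H f K v (bfsL H f K v (i-1)) := by
          apply mem_cands
          · rw [bfsL_length, Nat.sub_add_cancel h1]; omega
          · refine ⟨Xv H f K v m (i+1), ?_, ?_, ?_⟩
            · intro j hj
              rw [bfsL_length, Nat.sub_add_cancel h1] at hj
              rw [Xv_stable H f K v (by omega : j ≤ i - 1) (by omega : i - 1 ≤ m)]
              exact (hfreshX j (by omega)).symm ∘ Eq.symm
            · rw [Xv_stable H f K v (by omega : Nv H f K v m (i+1)/K ≤ i - 1)
                (by omega : i - 1 ≤ m)]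
              exact hadjX
            · rw [Xv_stable H f K v (by omega : Nv H f K v m (i+1)/K ≤ i - 1)
                (by omega : i - 1 ≤ m)]
              exact hfX
        have hne2 : (cands H f K v (bfsL H f K v (i-1))).Nonempty := ⟨_, hNm_mem⟩
        obtain ⟨_, hsp_min2, _, _, _⟩ := step_spec hne2
        have hNi_eq : Nv H f K v m i = (step H f K v (bfsL H f K v (i-1))).2 := by
          rw [← XNv_entry H f K v h1 (by omega : i ≤ m)]
        have hge : Nv H f K v m i ≤ Nv H f K v m (i+1) := by
          rw [hNi_eq]; exact hsp_min2 _ hmem2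
        have heq : Nv H f K v m i = Nv H f K v m (i+1) := le_antisymm hge hle
        have hqq : Nv H f K v m (i+1) / K = Nv H f K v m i / K := by rw [heq]
        have hXeq : Xv H f K v m i = Xv H f K v m (i+1) := by
          apply hf (Xv H f K v m (Nv H f K v m i / K))
          · exact hNm_adj
          · rw [← hqq]; exact hadjX
          · rw [hNm_f, ← hqq, hfX, heq]
        have := hinj' i (i+1) (by omega) (by omega) hXeq
        omega
    exact ⟨hinj', hreach', htree', hmono'⟩
lemma exists_cert [DecidableEq V] (H : SimpleGraph V) (K : ℕ) (f : V → V → ℕ)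
    (hf : ∀ a : V, Set.InjOn (f a) (H.neighborSet a))
    (hfK : ∀ a b : V, H.Adj a b → f a b < K)
    (v : V) (m : ℕ) (hbig : m + 1 ≤ Nat.card {w : V // H.Reachable v w}) :
    ∃ (x : ℕ → V) (n : ℕ → ℕ),
      x 0 = v ∧ (∀ i j, i ≤ m → j ≤ m → x i = x j → i = j) ∧
      (∀ i j, i < j → j < m → n i < n j) ∧ (∀ i, i < m → n i < (m+1) * K) ∧
      (∀ i, i < m → n i / K < i + 1 ∧ H.Adj (x (n i / K)) (x (i+1)) ∧
        f (x (n i / K)) (x (i+1)) = n i % K) := by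
  obtain ⟨hinj, hreach, htree, hmono⟩ := bfs_invariant H f K v m hf hfK hbig m le_rfl
  have key : ∀ j, j ≤ m → ∀ i, 1 ≤ i → i < j →
      Nv H f K v m i < Nv H f K v m j := by
    intro j
    induction j with
    | zero => intro _ i _ h; omega
    | succ j ihj =>
      intro hj i h1 hij
      rcases Nat.lt_or_ge i j with h | h
      · exact (ihj (by omega) i h1 h).trans (hmono j (by omega) (by omega))
      · have : i = j := by omega
        subst this
        exact hmono i h1 (by omega)
  refine ⟨Xv H f K v m, fun i => Nv H f K v m (i+1), Xv_zero H f K v m, hinj,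
    fun i j hij hjm => key (j+1) (by omega) (i+1) (by omega) (by omega),
    fun i him => ?_, fun i him => ?_⟩
  · obtain ⟨hmem, -, -, -⟩ := htree (i+1) (by omega) (by omega)
    have := (candP_of_mem_cands hmem).1
    rw [bfsL_length, Nat.add_sub_cancel] at this
    calc Nv H f K v m (i+1) < (i+1) * K := this
      _ ≤ (m+1) * K := Nat.mul_le_mul_right K (by omega)
  · obtain ⟨-, hdiv, hadj, hfe⟩ := htree (i+1) (by omega) (by omega)
    exact ⟨hdiv, hadj, hfe⟩
/-- `i`-th smallest element of a certificate finset. -/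
noncomputable def ith (m : ℕ) (c : Finset ℕ) (i : ℕ) : ℕ :=
  if h : c.card = m then (if hi : i < m then c.orderEmbOfFin h ⟨i, hi⟩ else 0) else 0

/-- The event that the certificate `(v, c)` is "realized" in the random set `s`. -/
def ACert (p K m : ℕ) (G : SimpleGraph (Fin p)) (f : Fin p → Fin p → ℕ) (v : Fin p)
    (c : Finset ℕ) : Set (Fin p → Bool) :=
  {s | ∃ x : ℕ → Fin p, x 0 = v ∧ (∀ i j, i ≤ m → j ≤ m → x i = x j → i = j) ∧
    (∀ i, i ≤ m → s (x i) = true) ∧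
    ∀ i, i < m → ith m c i / K < i + 1 ∧ G.Adj (x (ith m c i / K)) (x (i+1)) ∧
      f (x (ith m c i / K)) (x (i+1)) = ith m c i % K}

lemma ACert_unique {p K m : ℕ} {G : SimpleGraph (Fin p)} {f : Fin p → Fin p → ℕ}
    (hf : ∀ a, Set.InjOn (f a) (G.neighborSet a)) {v : Fin p} {c : Finset ℕ}
    {x y : ℕ → Fin p} (hx0 : x 0 = v) (hy0 : y 0 = v)
    (hxΦ : ∀ i, i < m → ith m c i / K < i + 1 ∧ G.Adj (x (ith m c i / K)) (x (i+1)) ∧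
      f (x (ith m c i / K)) (x (i+1)) = ith m c i % K)
    (hyΦ : ∀ i, i < m → ith m c i / K < i + 1 ∧ G.Adj (y (ith m c i / K)) (y (i+1)) ∧
      f (y (ith m c i / K)) (y (i+1)) = ith m c i % K) :
    ∀ i, i ≤ m → x i = y i := by
  intro i
  induction i using Nat.strong_induction_on with
  | _ i ih =>
    intro him
    match i with
    | 0 => rw [hx0, hy0]
    | (j+1) =>
      obtain ⟨hq, hxa, hxf⟩ := hxΦ j (by omega)
      obtain ⟨-, hya, hyf⟩ := hyΦ j (by omega)
      have hpar : x (ith m c j / K) = y (ith m c j / K) := ih _ (by omega) (by omega)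
      rw [hpar] at hxa hxf
      exact hf (y (ith m c j / K)) hxa hya (hxf.trans hyf.symm)

lemma measure_cyl (p : ℕ) (e : NNReal) (he : e ≤ 1) (T : Finset (Fin p)) :
    (Measure.pi fun _ : Fin p => (PMF.bernoulli e he).toMeasure)
      {s : Fin p → Bool | ∀ u ∈ T, s u = true} = (e : ℝ≥0∞) ^ T.card := by
  classical
  have h1 : {s : Fin p → Bool | ∀ u ∈ T, s u = true} =
      Set.pi Set.univ fun i => if i ∈ T then ({true} : Set Bool) else Set.univ := by
    ext s
    simp only [Set.mem_setOf_eq, Set.mem_pi, Set.mem_univ, forall_true_left]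
    constructor
    · intro h i
      by_cases hi : i ∈ T
      · simp [hi, h i hi]
      · simp [hi]
    · intro h u hu
      have := h u
      simpa [hu] using this
  rw [h1, Measure.pi_pi]
  have h2 : ∀ i : Fin p, (PMF.bernoulli e he).toMeasure
      (if i ∈ T then ({true} : Set Bool) else Set.univ) = if i ∈ T then (e : ℝ≥0∞) else 1 := by
    intro i
    by_cases hi : i ∈ T
    · simp only [if_pos hi]
      rw [PMF.toMeasure_apply_singleton _ _ (measurableSet_singleton _)]
      rfl
    · simp only [if_neg hi]
      exact measure_univ
  rw [Finset.prod_congr rfl fun i _ => h2 i,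
    Finset.prod_ite_mem Finset.univ T fun _ => (e : ℝ≥0∞), Finset.univ_inter, Finset.prod_const]

lemma ACert_measure_le {p K m : ℕ} {G : SimpleGraph (Fin p)} {f : Fin p → Fin p → ℕ}
    (hf : ∀ a, Set.InjOn (f a) (G.neighborSet a)) (e : NNReal) (he : e ≤ 1)
    (v : Fin p) (c : Finset ℕ) :
    (Measure.pi fun _ : Fin p => (PMF.bernoulli e he).toMeasure) (ACert p K m G f v c)
      ≤ (e : ℝ≥0∞) ^ (m+1) := by
  classical
  rcases Set.eq_empty_or_nonempty (ACert p K m G f v c) with h | h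
  · simp [h]
  obtain ⟨s₀, x₀, hx00, hx0inj, hx0s, hx0Φ⟩ := h
  set T : Finset (Fin p) := (Finset.range (m+1)).image x₀ with hTdef
  have hsub : ACert p K m G f v c ⊆ {s : Fin p → Bool | ∀ u ∈ T, s u = true} := by
    rintro s ⟨x, hx0, hxinj, hxs, hxΦ⟩
    intro u hu
    obtain ⟨i, hi, rfl⟩ := Finset.mem_image.mp hu
    rw [Finset.mem_range] at hi
    have hxy : x i = x₀ i := ACert_unique hf hx0 hx00 hxΦ hx0Φ i (by omega)
    rw [← hxy]
    exact hxs i (by omega)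
  have hT : T.card = m + 1 := by
    rw [hTdef, Finset.card_image_of_injOn, Finset.card_range]
    intro a ha b hb hab
    rw [Finset.mem_coe, Finset.mem_range] at ha hb
    exact hx0inj a b (by omega) (by omega) hab
  calc (Measure.pi fun _ : Fin p => (PMF.bernoulli e he).toMeasure) (ACert p K m G f v c)
      ≤ (Measure.pi fun _ : Fin p => (PMF.bernoulli e he).toMeasure)
        {s : Fin p → Bool | ∀ u ∈ T, s u = true} := measure_mono hsub
    _ = (e : ℝ≥0∞) ^ T.card := measure_cyl p e he T
    _ = (e : ℝ≥0∞) ^ (m+1) := by rw [hT]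

lemma pow_le_exp_mul_factorial : ∀ m : ℕ, ((m : ℝ) + 1) ^ m ≤
    Real.exp 1 ^ (m+1) * (Nat.factorial m) := by
  intro m
  induction m with
  | zero =>
    have := Real.add_one_le_exp (1:ℝ)
    simp only [pow_zero, Nat.factorial_zero, Nat.cast_one, mul_one, pow_one, zero_add, Nat.cast_zero]
    nlinarith
  | succ m ih =>
    have hm1 : (0:ℝ) < (m:ℝ) + 1 := by positivity
    have key : ((m:ℝ) + 2) ^ (m+1) ≤ Real.exp 1 * ((m:ℝ)+1)^(m+1) := by
      have h1 : (m:ℝ) + 2 = ((m:ℝ)+1) * (1 + 1/((m:ℝ)+1)) := by field_simp; ring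
      have h2 : (1 + 1/((m:ℝ)+1)) ^ (m+1) ≤ Real.exp 1 := by
        have h3 : (1:ℝ) + 1/((m:ℝ)+1) ≤ Real.exp (1/((m:ℝ)+1)) := by
          have := Real.add_one_le_exp (1/((m:ℝ)+1)); linarith
        calc (1 + 1/((m:ℝ)+1)) ^ (m+1) ≤ Real.exp (1/((m:ℝ)+1)) ^ (m+1) :=
              pow_le_pow_left₀ (by positivity) h3 _
          _ = Real.exp (((m+1 : ℕ):ℝ) * (1/((m:ℝ)+1))) := by
              rw [Real.exp_nat_mul]
          _ = Real.exp 1 := by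
              push_cast
              rw [mul_one_div, div_self (ne_of_gt hm1)]
      calc ((m:ℝ)+2)^(m+1) = ((m:ℝ)+1)^(m+1) * (1 + 1/((m:ℝ)+1))^(m+1) := by
            rw [h1, mul_pow]
        _ ≤ ((m:ℝ)+1)^(m+1) * Real.exp 1 := by
            exact mul_le_mul_of_nonneg_left h2 (by positivity)
        _ = Real.exp 1 * ((m:ℝ)+1)^(m+1) := mul_comm _ _
    have hgoal : ((m:ℝ)+2)^(m+1) ≤ Real.exp 1 ^ (m+2) * (Nat.factorial (m+1)) := by
      calc ((m:ℝ)+2)^(m+1) ≤ Real.exp 1 * ((m:ℝ)+1)^(m+1) := key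
        _ = Real.exp 1 * (((m:ℝ)+1)^m * ((m:ℝ)+1)) := by ring
        _ ≤ Real.exp 1 * ((Real.exp 1 ^ (m+1) * (Nat.factorial m)) * ((m:ℝ)+1)) := by
            apply mul_le_mul_of_nonneg_left _ (Real.exp_pos 1).le
            exact mul_le_mul_of_nonneg_right ih (by positivity)
        _ = Real.exp 1 ^ (m+2) * ((Nat.factorial m) * ((m:ℝ)+1)) := by ring
        _ = Real.exp 1 ^ (m+2) * (Nat.factorial (m+1)) := by
            rw [Nat.factorial_succ]
            push_cast
            ring
    have hc : ((m+1 : ℕ):ℝ) + 1 = (m:ℝ) + 2 := by push_cast; ring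
    rw [hc]
    exact hgoal

lemma choose_le_pow_exp (K m : ℕ) (hK : 1 ≤ K) :
    (((m+1) * K).choose m : ℝ) ≤ (Real.exp 1 * K) ^ (m+1) := by
  have h1 : (((m+1) * K).choose m : ℝ) ≤ ((((m+1) * K : ℕ)) : ℝ) ^ m / (Nat.factorial m) :=
    Nat.choose_le_pow_div m ((m+1)*K)
  have hfac : (0:ℝ) < (Nat.factorial m : ℝ) := by exact_mod_cast Nat.factorial_pos m
  have h2 := pow_le_exp_mul_factorial m
  have hK' : (1:ℝ) ≤ (K:ℝ) := by exact_mod_cast hK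
  calc (((m+1) * K).choose m : ℝ) ≤ ((((m+1) * K : ℕ)) : ℝ) ^ m / (Nat.factorial m) := h1
    _ = ((m:ℝ)+1)^m * (K:ℝ)^m / (Nat.factorial m) := by push_cast; rw [mul_pow]
    _ ≤ (Real.exp 1 ^ (m+1) * (Nat.factorial m)) * (K:ℝ)^m / (Nat.factorial m) := by
        gcongr
    _ = Real.exp 1 ^ (m+1) * (K:ℝ)^m := by field_simp
    _ ≤ Real.exp 1 ^ (m+1) * (K:ℝ)^(m+1) := by
        apply mul_le_mul_of_nonneg_left _ (by positivity)
        exact pow_le_pow_right₀ hK' (by omega)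
    _ = (Real.exp 1 * K) ^ (m+1) := (mul_pow _ _ _).symm
end Stmt0Aux

open Stmt0Aux in
/-- Let `G` be a `K`-sparse graph on `{1,...,p}` (every vertex has degree at
most `K`).  Let `S` be a random subset of the vertices, each vertex included independently with
probability `ε ∈ (0,1)`.  Then with probability at least `1 - p * (e * ε * K)^(m+1)`, every
connected component of the subgraph of `G` induced on `S` has at most `m` vertices. -/
theorem stmt_0 (p K m : ℕ) (hm : 1 ≤ m) (G : SimpleGraph (Fin p))
    (hK : ∀ v, (G.neighborSet v).ncard ≤ K)
    (ε : ℝ) (hε0 : 0 < ε) (hε1 : ε < 1) :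
    1 - ENNReal.ofReal ((p : ℝ) * (Real.exp 1 * ε * K) ^ (m + 1)) ≤
      (Measure.pi fun _ : Fin p =>
        (PMF.bernoulli (Real.toNNReal ε) (Real.toNNReal_le_one.mpr hε1.le)).toMeasure)
      {s : Fin p → Bool |
        ∀ v : {x : Fin p | s x = true},
          Nat.card {w : {x : Fin p | s x = true} //
            (SimpleGraph.induce {x : Fin p | s x = true} G).Reachable v w} ≤ m} := by
  classical
  set e : NNReal := Real.toNNReal ε with hedef
  set he : e ≤ 1 := Real.toNNReal_le_one.mpr hε1.le
  set μ : Measure (Fin p → Bool) :=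
    Measure.pi fun _ : Fin p => (PMF.bernoulli e he).toMeasure with hμdef
  set E : Set (Fin p → Bool) :=
    {s : Fin p → Bool |
        ∀ v : {x : Fin p | s x = true},
          Nat.card {w : {x : Fin p | s x = true} //
            (SimpleGraph.induce {x : Fin p | s x = true} G).Reachable v w} ≤ m} with hEdef
  show 1 - ENNReal.ofReal ((p : ℝ) * (Real.exp 1 * ε * K) ^ (m + 1)) ≤ μ E
  by_cases hK0 : K = 0
  · -- no edges at all: every component is a single vertex
    subst hK0
    have hnoadj : ∀ a b : Fin p, ¬ G.Adj a b := by
      intro a b hab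
      have h1 := hK a
      have h2 : b ∈ G.neighborSet a := hab
      have h3 : (G.neighborSet a).ncard = 0 := Nat.le_zero.mp h1
      rw [Set.ncard_eq_zero (Set.toFinite _)] at h3
      rw [h3] at h2
      exact h2
    have hE : E = Set.univ := by
      rw [hEdef]
      ext s
      simp only [Set.mem_setOf_eq, Set.mem_univ, iff_true]
      intro v
      have hsub : ∀ w : {x : Fin p | s x = true},
          (SimpleGraph.induce {x : Fin p | s x = true} G).Reachable v w → w = v := by
        intro w hw
        obtain ⟨wk⟩ := hw
        cases wk with
        | nil => rfl
        | cons h q => exact absurd h (hnoadj _ _)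
      have huniq : Nat.card {w : {x : Fin p | s x = true} //
          (SimpleGraph.induce {x : Fin p | s x = true} G).Reachable v w} = 1 := by
        rw [Nat.card_eq_one_iff_unique]
        refine ⟨⟨fun a b => ?_⟩, ⟨⟨v, SimpleGraph.Reachable.refl v⟩⟩⟩
        apply Subtype.ext
        rw [hsub a.1 a.2, hsub b.1 b.2]
      omega
    rw [hE, measure_univ]
    exact tsub_le_self
  · have hK1 : 1 ≤ K := Nat.one_le_iff_ne_zero.mpr hK0
    -- choose slot functions
    have hslot : ∀ a : Fin p, ∃ g : Fin p → ℕ,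
        Set.InjOn g (G.neighborSet a) ∧ ∀ b ∈ G.neighborSet a, g b < K := by
      intro a
      have hfin : (G.neighborSet a).Finite := Set.toFinite _
      have hcard : hfin.toFinset.card ≤ K := by
        have h := hK a
        rwa [Set.ncard_eq_toFinset_card _ hfin] at h
      refine ⟨fun b => if hb : b ∈ hfin.toFinset then (hfin.toFinset.equivFin ⟨b, hb⟩ : ℕ)
        else 0, ?_, ?_⟩
      · intro b1 h1 b2 h2 heq
        have hb1 : b1 ∈ hfin.toFinset := hfin.mem_toFinset.mpr h1
        have hb2 : b2 ∈ hfin.toFinset := hfin.mem_toFinset.mpr h2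
        dsimp only at heq
        rw [dif_pos hb1, dif_pos hb2] at heq
        have := hfin.toFinset.equivFin.injective (Fin.val_injective heq)
        exact Subtype.mk_eq_mk.mp this
      · intro b hb
        dsimp only
        rw [dif_pos (hfin.mem_toFinset.mpr hb)]
        exact lt_of_lt_of_le (Fin.is_lt _) hcard
    choose f hfinj hfKb using hslot
    have hfK' : ∀ a b : Fin p, G.Adj a b → f a b < K := fun a b hab => hfKb a b hab
    set I : Finset (Fin p × Finset ℕ) :=
      Finset.univ ×ˢ Finset.powersetCard m (Finset.range ((m+1)*K)) with hIdef
    -- the complement is covered by the certificate events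
    have hcover : Eᶜ ⊆ ⋃ vc ∈ I, ACert p K m G f vc.1 vc.2 := by
      intro s hs
      rw [hEdef] at hs
      simp only [Set.mem_compl_iff, Set.mem_setOf_eq, not_forall, not_le] at hs
      obtain ⟨v₀, hv₀⟩ := hs
      set H := SimpleGraph.induce {x : Fin p | s x = true} G with hHdef
      set f' : {x : Fin p | s x = true} → {x : Fin p | s x = true} → ℕ :=
        fun a b => f a.1 b.1 with hf'def
      have hf' : ∀ a, Set.InjOn (f' a) (H.neighborSet a) := by
        intro a b1 h1 b2 h2 heq
        have hadj1 : G.Adj a.1 b1.1 := h1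
        have hadj2 : G.Adj a.1 b2.1 := h2
        exact Subtype.ext (hfinj a.1 hadj1 hadj2 heq)
      have hfK'' : ∀ a b, H.Adj a b → f' a b < K := by
        intro a b hab
        exact hfK' a.1 b.1 hab
      obtain ⟨x', n, hx0, hinj, hmono, hnb, hΦ⟩ :=
        exists_cert H K f' hf' hfK'' v₀ m (by omega)
      set x : ℕ → Fin p := fun i => (x' i).1 with hxdef
      set c : Finset ℕ := (Finset.range m).image n with hcdef
      have hninj : Set.InjOn n ↑(Finset.range m) := by
        intro a ha b hb hab
        rw [Finset.mem_coe, Finset.mem_range] at ha hb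
        by_contra hne
        rcases Nat.lt_or_ge a b with h | h
        · exact absurd hab (Nat.ne_of_lt (hmono a b h hb))
        · have h' : b < a := by omega
          exact absurd hab.symm (Nat.ne_of_lt (hmono b a h' ha))
      have hccard : c.card = m := by
        rw [hcdef, Finset.card_image_of_injOn hninj, Finset.card_range]
      have hith : ∀ i, i < m → ith m c i = n i := by
        intro i him
        have hemb : (fun j : Fin m => n j) = c.orderEmbOfFin hccard := by
          apply Finset.orderEmbOfFin_unique hccard
          · intro j
            exact Finset.mem_image.mpr ⟨j, Finset.mem_range.mpr j.2, rfl⟩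
          · intro a b hab
            exact hmono a b hab b.2
        unfold ith
        rw [dif_pos hccard, dif_pos him]
        exact (congrFun hemb ⟨i, him⟩).symm
      have hcI : (↑v₀, c) ∈ I := by
        rw [hIdef, Finset.mem_product]
        refine ⟨Finset.mem_univ _, Finset.mem_powersetCard.mpr ⟨?_, hccard⟩⟩
        intro a ha
        rw [hcdef] at ha
        obtain ⟨i, hi, rfl⟩ := Finset.mem_image.mp ha
        rw [Finset.mem_range] at hi
        exact Finset.mem_range.mpr (hnb i hi)
      refine Set.mem_biUnion hcI ?_
      refine ⟨x, congrArg Subtype.val hx0, ?_, ?_, ?_⟩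
      · intro i j hi hj hij
        exact hinj i j hi hj (Subtype.ext hij)
      · intro i _
        exact (x' i).2
      · intro i hi
        rw [hith i hi]
        obtain ⟨hdiv, hadj, hfe⟩ := hΦ i hi
        exact ⟨hdiv, hadj, hfe⟩
    -- union bound
    have hIcard : I.card = p * ((m+1)*K).choose m := by
      rw [hIdef, Finset.card_product, Finset.card_univ, Fintype.card_fin,
        Finset.card_powersetCard, Finset.card_range]
    have hEc : μ Eᶜ ≤ ENNReal.ofReal ((p : ℝ) * (Real.exp 1 * ε * K) ^ (m + 1)) := by
      have hch : (((m+1)*K).choose m : ℝ) ≤ (Real.exp 1 * K)^(m+1) :=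
        choose_le_pow_exp K m hK1
      calc μ Eᶜ ≤ μ (⋃ vc ∈ I, ACert p K m G f vc.1 vc.2) := measure_mono hcover
        _ ≤ ∑ vc ∈ I, μ (ACert p K m G f vc.1 vc.2) := measure_biUnion_finset_le _ _
        _ ≤ ∑ _vc ∈ I, (e : ℝ≥0∞) ^ (m+1) :=
            Finset.sum_le_sum fun vc _ => ACert_measure_le hfinj e he vc.1 vc.2
        _ = (I.card : ℝ≥0∞) * (e : ℝ≥0∞) ^ (m+1) := by
            rw [Finset.sum_const, nsmul_eq_mul]
        _ = ((p * ((m+1)*K).choose m : ℕ) : ℝ≥0∞) * (e : ℝ≥0∞) ^ (m+1) := by rw [hIcard]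
        _ ≤ ENNReal.ofReal ((p : ℝ) * (Real.exp 1 * ε * K) ^ (m + 1)) := by
            rw [hedef]
            change ((p * ((m+1)*K).choose m : ℕ) : ℝ≥0∞) * (ENNReal.ofReal ε) ^ (m+1) ≤ _
            rw [← ENNReal.ofReal_pow hε0.le, ← ENNReal.ofReal_natCast,
              ← ENNReal.ofReal_mul (by positivity)]
            apply ENNReal.ofReal_le_ofReal
            have hrw : (Real.exp 1 * ε * (K:ℝ))^(m+1)
                = (Real.exp 1 * K)^(m+1) * ε^(m+1) := by
              rw [show Real.exp 1 * ε * (K:ℝ) = (Real.exp 1 * (K:ℝ)) * ε by ring, mul_pow]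
            rw [hrw]
            push_cast
            have hεp : (0:ℝ) ≤ ε^(m+1) := by positivity
            calc (p : ℝ) * (((m+1)*K).choose m : ℝ) * ε^(m+1)
                ≤ (p : ℝ) * (Real.exp 1 * K)^(m+1) * ε^(m+1) := by
                  apply mul_le_mul_of_nonneg_right _ hεp
                  exact mul_le_mul_of_nonneg_left hch (by positivity)
              _ = (p:ℝ) * ((Real.exp 1 * K)^(m+1) * ε^(m+1)) := by ring
        
    have h1 : (1 : ℝ≥0∞) ≤ μ E + μ Eᶜ := by
      calc (1:ℝ≥0∞) = μ Set.univ := measure_univ.symm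
        _ = μ (E ∪ Eᶜ) := by rw [Set.union_compl_self]
        _ ≤ μ E + μ Eᶜ := measure_union_le _ _
    exact tsub_le_iff_right.mpr (h1.trans (add_le_add le_rfl hEc))
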